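/- The ℚ-vector space ℚ[x,y]/(x²·y²−1, y²−2·x·y−1) has dimension 4 over ℚ. -/

import Mathlib

open MvPolynomial Polynomial

noncomputable section QR16

abbrev qrI : Ideal (MvPolynomial (Fin 2) ℚ) :=
  Ideal.span ({X 0 ^ 2 * X 1 ^ 2 - 1, X 1 ^ 2 - 2 * (X 0 * X 1) - 1} :
    Set (MvPolynomial (Fin 2) ℚ))

abbrev qrP : ℚ[X] := Polynomial.X ^ 4 - 2 * Polynomial.X ^ 2 - 3

lemma qrP_ne_zero : qrP ≠ 0 := by
  intro h
  have := congrArg (Polynomial.coeff · 4) h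
  simp [qrP, Polynomial.coeff_sub] at this

lemma qrP_natDegree : qrP.natDegree = 4 := by
  unfold qrP
  compute_degree!

lemma qr_h1 : (Ideal.Quotient.mk qrI (X 0)) ^ 2 * (Ideal.Quotient.mk qrI (X 1)) ^ 2 - 1 = 0 := by
  have : Ideal.Quotient.mk qrI (X 0 ^ 2 * X 1 ^ 2 - 1) = 0 := by
    rw [Ideal.Quotient.eq_zero_iff_mem]
    exact Ideal.subset_span (by simp)
  simpa using this

lemma qr_h2 : (Ideal.Quotient.mk qrI (X 1)) ^ 2
    - 2 * (Ideal.Quotient.mk qrI (X 0) * Ideal.Quotient.mk qrI (X 1)) - 1 = 0 := by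
  have : Ideal.Quotient.mk qrI (X 1 ^ 2 - 2 * (X 0 * X 1) - 1) = 0 := by
    rw [Ideal.Quotient.eq_zero_iff_mem]
    exact Ideal.subset_span (by simp)
  simpa [map_ofNat (Ideal.Quotient.mk qrI) 2] using this

def qrφ : MvPolynomial (Fin 2) ℚ →ₐ[ℚ] AdjoinRoot qrP :=
  MvPolynomial.aeval
    ![AdjoinRoot.of qrP (1/6) * (5 * AdjoinRoot.root qrP - AdjoinRoot.root qrP ^ 3),
      AdjoinRoot.root qrP]

lemma qr_root_rel : AdjoinRoot.root qrP ^ 4 - 2 * AdjoinRoot.root qrP ^ 2 - 3 = 0 := by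
  have := AdjoinRoot.eval₂_root qrP
  simpa [qrP] using this

lemma qr_of_six : AdjoinRoot.of qrP (1/6) * 6 = 1 := by
  rw [show ((6 : AdjoinRoot qrP)) = AdjoinRoot.of qrP 6 from (map_ofNat _ 6).symm, ← map_mul]
  norm_num

lemma qrφ_vanish : qrI ≤ RingHom.ker qrφ.toRingHom := by
  rw [Ideal.span_le]
  have hr := qr_root_rel
  have h6 := qr_of_six
  set r := AdjoinRoot.root qrP with hrdef
  set u := AdjoinRoot.of qrP (1/6) with hudef
  rintro g (rfl | rfl) <;>
    simp only [SetLike.mem_coe, RingHom.mem_ker, AlgHom.toRingHom_eq_coe,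
      RingHom.coe_coe, qrφ, map_sub, map_mul, map_pow, map_one, map_ofNat,
      MvPolynomial.aeval_X, Matrix.cons_val_zero, Matrix.cons_val_one, Matrix.head_cons]
  · linear_combination (u^2*(r^4 - 8*r^2 + 12)) * hr + (6*u+1) * h6
  · linear_combination (2*u) * hr + (1 - r^2) * h6

def qrφ' : (MvPolynomial (Fin 2) ℚ ⧸ qrI) →ₐ[ℚ] AdjoinRoot qrP :=
  Ideal.Quotient.liftₐ qrI qrφ (fun _ ha => qrφ_vanish ha)

lemma qr_aeval_y : Polynomial.aeval (Ideal.Quotient.mk qrI (X 1)) qrP = 0 := by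
  have h1 := qr_h1
  have h2 := qr_h2
  set x := Ideal.Quotient.mk qrI (X 0)
  set y := Ideal.Quotient.mk qrI (X 1)
  simp only [qrP, map_sub, map_mul, map_pow, map_ofNat, Polynomial.aeval_X,
    map_one]
  linear_combination 4 * h1 + (y^2 + 2*x*y - 1) * h2

def qrψ : AdjoinRoot qrP →ₐ[ℚ] (MvPolynomial (Fin 2) ℚ ⧸ qrI) :=
  AdjoinRoot.liftAlgHom qrP (Algebra.ofId ℚ _) (Ideal.Quotient.mk qrI (X 1)) qr_aeval_y

lemma qrφ'_mk (g : MvPolynomial (Fin 2) ℚ) : qrφ' (Ideal.Quotient.mk qrI g) = qrφ g := rfl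

lemma qrψ_root : qrψ (AdjoinRoot.root qrP) = Ideal.Quotient.mk qrI (X 1) := by
  simp [qrψ, AdjoinRoot.liftAlgHom]

lemma qrψ_of (r : ℚ) : qrψ (AdjoinRoot.of qrP r) = algebraMap ℚ _ r := by
  simp [qrψ, AdjoinRoot.liftAlgHom]

lemma qr_of_six' : (algebraMap ℚ (MvPolynomial (Fin 2) ℚ ⧸ qrI)) (1/6) * 6 = 1 := by
  rw [show ((6 : MvPolynomial (Fin 2) ℚ ⧸ qrI)) = algebraMap ℚ _ 6 from (map_ofNat _ 6).symm,
    ← map_mul]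
  norm_num

def qrEquiv : (MvPolynomial (Fin 2) ℚ ⧸ qrI) ≃ₐ[ℚ] AdjoinRoot qrP := by
  refine AlgEquiv.ofAlgHom qrφ' qrψ ?_ ?_
  · apply AdjoinRoot.algHom_ext
    simp [qrψ_root, qrφ'_mk, qrφ, Ideal.Quotient.liftₐ_apply]
  · apply Ideal.Quotient.algHom_ext
    apply MvPolynomial.algHom_ext
    intro i
    fin_cases i
    · have h1 := qr_h1
      have h2 := qr_h2
      have h6 := qr_of_six'
      simp only [AlgHom.comp_apply, Ideal.Quotient.mkₐ_eq_mk, qrφ'_mk,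
        Ideal.Quotient.liftₐ_apply, Ideal.Quotient.lift_mk, AlgHom.coe_toRingHom, qrφ,
        MvPolynomial.aeval_X, Matrix.cons_val_zero, map_sub, map_mul, map_pow, map_ofNat,
        qrψ_root, AlgHom.id_apply, Fin.zero_eta, Fin.isValue,
        qrψ_of]
      set v := algebraMap ℚ (MvPolynomial (Fin 2) ℚ ⧸ qrI) (1/6)
      set x := Ideal.Quotient.mk qrI (X 0)
      set y := Ideal.Quotient.mk qrI (X 1)
      linear_combination (-(v)*(4*y-8*x)) * h1 + (-(v)*(y+2*x-4*x^2*y)) * h2 + x * h6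
    · simp [qrφ'_mk, qrψ_root, qrφ, Ideal.Quotient.liftₐ_apply]

end QR16

theorem stmt_16 :
    Module.finrank ℚ
      (MvPolynomial (Fin 2) ℚ ⧸ Ideal.span
        ({X 0 ^ 2 * X 1 ^ 2 - 1, X 1 ^ 2 - 2 * (X 0 * X 1) - 1} :
          Set (MvPolynomial (Fin 2) ℚ))) = 4 := by
  have := qrEquiv.toLinearEquiv.finrank_eq
  rw [show Module.finrank ℚ (MvPolynomial (Fin 2) ℚ ⧸ qrI) = _ from this]
  rw [(AdjoinRoot.powerBasis qrP_ne_zero).finrank, AdjoinRoot.powerBasis_dim, qrP_natDegree]
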